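/- For all integers m ≥ 1 and n ≥ 1, det D′_{m,n} = ∏_{h=1}^{m} ∏_{k=1}^{n} (4·cos²(hπ/(2m+1)) + 4·cos²((2k−1)π/(4n))). -/

import Mathlib

open Real

/-- The `n × n` matrix `A′_n`: all diagonal entries `4`, entry `-1` at every position
`(h,k)` with `|h-k| = 1` except at position `(n, n-1)` (the last row, next-to-last
column), where the entry is `-2`, and `0` elsewhere. -/
def matA' (n : ℕ) : Matrix (Fin n) (Fin n) ℝ :=
  Matrix.of fun h k =>
    if h = k then 4
    else if (h : ℕ) = n - 1 ∧ (k : ℕ) + 2 = n then -2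
    else if |(h : ℤ) - (k : ℤ)| = 1 then -1 else 0

/-- `B′_n` is `A′_n` with every diagonal entry `4` replaced by `3`. -/
def matB' (n : ℕ) : Matrix (Fin n) (Fin n) ℝ :=
  Matrix.of fun h k => if h = k then 3 else matA' n h k

/-- The `mn × mn` block-tridiagonal matrix `D′_{m,n}`: diagonal blocks `A′_n` except the
last one, which is `B′_n`; blocks immediately above and below the diagonal are `-I_n`;
all other blocks are zero.  (For `m = 1` this is just `B′_n`.) -/
def matD' (m n : ℕ) : Matrix (Fin m × Fin n) (Fin m × Fin n) ℝ :=
  Matrix.of fun p q =>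
    if p.1 = q.1 then
      (if (p.1 : ℕ) = m - 1 then matB' n else matA' n) p.2 q.2
    else if |(p.1 : ℤ) - (q.1 : ℤ)| = 1 then
      (-(1 : Matrix (Fin n) (Fin n) ℝ)) p.2 q.2
    else 0

open Finset

noncomputable section SandpileAux

lemma re_inv_sub_one {ξ : ℂ} (h1 : Complex.normSq ξ = 1) (hne : ξ ≠ 1) :
    ((ξ - 1)⁻¹).re = -(1/2) := by
  have hnorm := h1
  rw [Complex.normSq_apply] at hnorm
  have hre : ξ.re ≠ 1 := by
    intro h
    apply hne
    have him : ξ.im = 0 := by nlinarith [sq_nonneg ξ.im]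
    exact Complex.ext h him
  rw [Complex.inv_re, Complex.normSq_apply]
  simp only [Complex.sub_re, Complex.sub_im, Complex.one_re, Complex.one_im, sub_zero]
  have hden : (ξ.re - 1) * (ξ.re - 1) + ξ.im * ξ.im = 2 - 2 * ξ.re := by nlinarith
  rw [hden, div_eq_iff (by intro h; apply hre; linarith)]
  ring

lemma re_inv_add_one {ξ : ℂ} (h1 : Complex.normSq ξ = 1) (hne : ξ ≠ -1) :
    ((ξ + 1)⁻¹).re = 1/2 := by
  have h2 : Complex.normSq (-ξ) = 1 := by rwa [Complex.normSq_neg]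
  have h3 : -ξ ≠ 1 := by intro h; apply hne; rw [← neg_neg ξ, h]
  have h4 := re_inv_sub_one h2 h3
  have h5 : (-ξ - 1)⁻¹ = -(ξ + 1)⁻¹ := by
    rw [show -ξ - 1 = -(ξ + 1) by ring, inv_neg]
  rw [h5, Complex.neg_re] at h4
  linarith

lemma sum_cos_re (θ : ℝ) (M : ℕ) :
    ∑ i ∈ range M, Real.cos (i * θ) = (∑ i ∈ range M, Complex.exp (θ * Complex.I) ^ i).re := by
  rw [Complex.re_sum]
  refine Finset.sum_congr rfl fun i _ => ?_
  rw [← Complex.exp_nat_mul]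
  have : (i : ℂ) * (↑θ * Complex.I) = ((i * θ : ℝ) : ℂ) * Complex.I := by push_cast; ring
  rw [this, Complex.exp_ofReal_mul_I_re]

lemma normSq_exp_mul_I (x : ℝ) : Complex.normSq (Complex.exp (x * Complex.I)) = 1 := by
  rw [← Complex.sq_norm, Complex.norm_exp_ofReal_mul_I, one_pow]

lemma exp_mul_I_ne_one {x : ℝ} (hx : ∀ k : ℤ, x ≠ k * (2 * π)) :
    Complex.exp (x * Complex.I) ≠ 1 := by
  intro h
  rw [Complex.exp_eq_one_iff] at h
  obtain ⟨k, hk⟩ := h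
  apply hx k
  have hk' : ((x:ℝ):ℂ) * Complex.I = ((k * (2*π) : ℝ) : ℂ) * Complex.I := by
    rw [hk]; push_cast; ring
  have := mul_right_cancel₀ Complex.I_ne_zero hk'
  exact_mod_cast this

lemma expR_pow (a : ℝ) (n : ℕ) :
    Complex.exp ((a : ℂ) * Complex.I) ^ n = Complex.exp (((n * a : ℝ) : ℂ) * Complex.I) := by
  rw [← Complex.exp_nat_mul]; congr 1; push_cast; ring

lemma expR_add (a b : ℝ) :
    Complex.exp (((a + b : ℝ) : ℂ) * Complex.I)
      = Complex.exp ((a:ℂ) * Complex.I) * Complex.exp ((b:ℂ) * Complex.I) := by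
  rw [← Complex.exp_add]; congr 1; push_cast; ring

lemma exp_int_pi_mul_I (c : ℤ) : Complex.exp (((c * π : ℝ):ℂ) * Complex.I) = (-1 : ℂ) ^ c := by
  have : ((c * π : ℝ) : ℂ) * Complex.I = (c : ℂ) * ((π : ℂ) * Complex.I) := by push_cast; ring
  rw [this, Complex.exp_int_mul, Complex.exp_pi_mul_I]

/-- Key sum: `∑_{i=0}^{m} cos(2πci/(2m+1)) = 1/2` when `(2m+1) ∤ c`. -/
lemma sum_cos_C (m : ℕ) (c : ℤ) (hc : ¬ ((2 * (m:ℤ) + 1) ∣ c)) :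
    ∑ i ∈ range (m + 1), Real.cos (i * (2 * π * c / (2 * m + 1))) = 1 / 2 := by
  set N : ℝ := 2 * m + 1 with hN
  have hNpos : (0:ℝ) < N := by positivity
  have hNne : N ≠ 0 := ne_of_gt hNpos
  have hπ : (π:ℝ) ≠ 0 := Real.pi_ne_zero
  set θ : ℝ := 2 * π * c / N with hθ
  set ζ : ℂ := Complex.exp ((θ:ℂ) * Complex.I) with hζ
  set ξ : ℂ := Complex.exp (((c * π / N : ℝ):ℂ) * Complex.I) with hξ
  have hζne : ζ ≠ 1 := by
    apply exp_mul_I_ne_one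
    intro k hk
    apply hc
    refine ⟨k, ?_⟩
    have h2 : θ * N = 2 * π * c := by rw [hθ]; field_simp
    rw [hk] at h2
    have h3 : (2*π) * (c:ℝ) = (2*π) * ((k:ℝ) * N) := by linarith
    have h4 : (c:ℝ) = (k:ℝ) * N := by
      have := mul_left_cancel₀ (by positivity : (2*π:ℝ) ≠ 0) h3
      exact this
    rw [hN] at h4
    have h5 : c = k * (2 * (m:ℤ) + 1) := by exact_mod_cast h4
    rw [h5]; ring
  have hζξ : ζ = ξ ^ 2 := by
    rw [hξ, expR_pow, hζ]
    congr 2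
    rw [hθ]; push_cast; ring
  have hξne1 : ξ ≠ 1 := by
    intro h; apply hζne; rw [hζξ, h, one_pow]
  have hξnem1 : ξ ≠ -1 := by
    intro h; apply hζne; rw [hζξ, h]; ring
  have htop : ζ ^ (m + 1) = (-1 : ℂ) ^ c * ξ := by
    rw [hζ, expR_pow]
    have hr : ((m+1 : ℕ):ℝ) * θ = c * π + c * π / N := by
      rw [hθ, hN]; push_cast; field_simp; ring
    rw [hr, expR_add, exp_int_pi_mul_I, hξ]
  rw [sum_cos_re, ← hζ, geom_sum_eq hζne, htop, hζξ]
  have hsq : Complex.normSq ξ = 1 := normSq_exp_mul_I _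
  rcases Int.even_or_odd c with hpar | hpar
  · rw [hpar.neg_one_zpow, one_mul]
    have heq : (ξ - 1) / ((ξ^2:ℂ) - 1) = (ξ + 1)⁻¹ := by
      rw [show (ξ^2:ℂ) - 1 = (ξ - 1) * (ξ + 1) by ring]
      rw [div_mul_eq_div_div, div_self (sub_ne_zero.mpr hξne1), one_div]
    rw [heq, re_inv_add_one hsq hξnem1]
  · rw [hpar.neg_one_zpow]
    have hne : ξ + 1 ≠ 0 := by
      intro h; apply hξnem1; linear_combination h
    have heq : ((-1) * ξ - 1) / ((ξ^2:ℂ) - 1) = -(ξ - 1)⁻¹ := by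
      rw [show (ξ^2:ℂ) - 1 = (ξ - 1) * (ξ + 1) by ring,
          show ((-1) * ξ - 1 : ℂ) = -(ξ + 1) by ring]
      rw [neg_div, div_mul_eq_div_div_swap, div_self hne, one_div]
    rw [heq, Complex.neg_re, re_inv_sub_one hsq hξne1]
    norm_num

/-- `∑_{j=0}^{n-1} cos(j·aπ/n) = 1` for odd `a`. -/
lemma sum_cos_F_odd (n : ℕ) (hn : 1 ≤ n) (a : ℤ) (ha : Odd a) :
    ∑ j ∈ range n, Real.cos (j * (a * π / n)) = 1 := by
  have hnne : (n:ℝ) ≠ 0 := by positivity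
  set θ : ℝ := a * π / n with hθ
  set ζ : ℂ := Complex.exp ((θ:ℂ) * Complex.I) with hζ
  have hpow : ζ ^ n = -1 := by
    rw [hζ, expR_pow]
    have hr : (n:ℝ) * θ = a * π := by rw [hθ]; field_simp
    rw [hr, exp_int_pi_mul_I, ha.neg_one_zpow]
  have hζne : ζ ≠ 1 := by
    intro h; rw [h, one_pow] at hpow
    norm_num at hpow
  rw [sum_cos_re, ← hζ, geom_sum_eq hζne, hpow]
  have heq : ((-1 : ℂ) - 1) / (ζ - 1) = (-2) * (ζ - 1)⁻¹ := by
    rw [show ((-1:ℂ) - 1) = -2 by ring, div_eq_mul_inv]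
  rw [heq]
  have : ((-2 : ℂ) * (ζ - 1)⁻¹).re = (-2) * ((ζ - 1)⁻¹).re := by
    simp [Complex.mul_re]

  rw [this, re_inv_sub_one (normSq_exp_mul_I _) hζne]
  norm_num

/-- `∑_{j=0}^{n-1} cos(j·aπ/n) = 0` for even `a` not divisible by `2n`. -/
lemma sum_cos_F_even (n : ℕ) (hn : 1 ≤ n) (a : ℤ) (ha : Even a) (hd : ¬ ((2 * (n:ℤ)) ∣ a)) :
    ∑ j ∈ range n, Real.cos (j * (a * π / n)) = 0 := by
  have hnne : (n:ℝ) ≠ 0 := by positivity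
  set θ : ℝ := a * π / n with hθ
  set ζ : ℂ := Complex.exp ((θ:ℂ) * Complex.I) with hζ
  have hpow : ζ ^ n = 1 := by
    rw [hζ, expR_pow]
    have hr : (n:ℝ) * θ = a * π := by rw [hθ]; field_simp
    rw [hr, exp_int_pi_mul_I, ha.neg_one_zpow]
  have hζne : ζ ≠ 1 := by
    apply exp_mul_I_ne_one
    intro k hk
    apply hd
    refine ⟨k, ?_⟩
    have h2 : θ * n = a * π := by rw [hθ]; field_simp
    rw [hk] at h2
    have h3 : (a:ℝ) * π = π * ((2*(k:ℝ)*n)) := by linarith [h2]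
    have h4 : (a:ℝ) = 2 * (k:ℝ) * n := by
      have := mul_left_cancel₀ Real.pi_ne_zero (by linarith [h3] : π * (a:ℝ) = π * (2*(k:ℝ)*n))
      linarith [this]
    have h5 : a = 2 * (n:ℤ) * k := by exact_mod_cast (by linarith [h4] : (a:ℝ) = 2*(n:ℝ)*(k:ℝ))
    rw [h5]
  rw [sum_cos_re, ← hζ, geom_sum_eq hζne, hpow, sub_self, zero_div, Complex.zero_re]

def thA (m : ℕ) (h : ℕ) : ℝ := (2 * h + 1) * π / (2 * m + 1)
def phA (n : ℕ) (k : ℕ) : ℝ := (2 * k + 1) * π / (2 * n)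

lemma sin_mul_sin (x y : ℝ) : sin x * sin y = (cos (x - y) - cos (x + y)) / 2 := by
  rw [Real.cos_sub_cos]
  have h1 : (x - y + (x + y)) / 2 = x := by ring
  have h2 : (x - y - (x + y)) / 2 = -y := by ring
  rw [h1, h2, Real.sin_neg]
  ring

lemma cos_nat_pi (k : ℕ) : cos (k * π) = (-1 : ℝ) ^ k := by
  induction k with
  | zero => simp
  | succ k ih =>
      have : ((k+1 : ℕ) : ℝ) * π = (k:ℝ) * π + π := by push_cast; ring
      rw [this, Real.cos_add_pi, ih]
      ring

lemma cos_int_pi_even {a : ℤ} (ha : Even a) : cos ((a:ℝ) * π) = 1 := by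
  obtain ⟨b, hb⟩ := ha
  have : ((a:ℝ)) * π = (b:ℝ) * (2 * π) := by rw [hb]; push_cast; ring
  rw [this, Real.cos_int_mul_two_pi]

lemma cos_int_pi_odd {a : ℤ} (ha : Odd a) : cos ((a:ℝ) * π) = -1 := by
  obtain ⟨b, hb⟩ := ha
  have : ((a:ℝ)) * π = (b:ℝ) * (2 * π) + π := by rw [hb]; push_cast; ring
  rw [this, Real.cos_add_pi, Real.cos_int_mul_two_pi]

lemma sin_top_phA (n k : ℕ) (hn : 1 ≤ n) : sin ((n:ℝ) * phA n k) = (-1 : ℝ)^k := by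
  have hnne : (n:ℝ) ≠ 0 := by positivity
  have : (n:ℝ) * phA n k = (k:ℝ) * π + π/2 := by rw [phA]; field_simp
  rw [this, Real.sin_add_pi_div_two, cos_nat_pi]

lemma cos_top_phA (n k : ℕ) (hn : 1 ≤ n) : cos ((n:ℝ) * phA n k) = 0 := by
  have hnne : (n:ℝ) ≠ 0 := by positivity
  have : (n:ℝ) * phA n k = (k:ℝ) * π + π/2 := by rw [phA]; field_simp
  rw [this, Real.cos_add_pi_div_two, Real.sin_nat_mul_pi, neg_zero]

/-- orthogonality sum for the `m`-part. -/
lemma S1 (m : ℕ) (h h' : Fin m) :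
    ∑ i : Fin m, sin (((i:ℕ)+1) * thA m h) * sin (((i:ℕ)+1) * thA m h')
      = if h = h' then (2*(m:ℝ)+1)/4 else 0 := by
  have hNne : (2*(m:ℝ)+1) ≠ 0 := by positivity
  set a : ℤ := (h:ℕ) - (h':ℕ) with ha
  set b : ℤ := (h:ℕ) + (h':ℕ) + 1 with hb
  have key : ∀ t : ℝ, sin (t * thA m h) * sin (t * thA m h')
      = (cos (t * (2*π*(a:ℝ)/(2*m+1))) - cos (t * (2*π*(b:ℝ)/(2*m+1)))) / 2 := by
    intro t
    have e1 : t * thA m h - t * thA m h' = t * (2*π*(a:ℝ)/(2*m+1)) := by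
      rw [thA, thA, ha]; push_cast; field_simp; ring
    have e2 : t * thA m h + t * thA m h' = t * (2*π*(b:ℝ)/(2*m+1)) := by
      rw [thA, thA, hb]; push_cast; field_simp; ring
    rw [sin_mul_sin, e1, e2]
  have hrw : ∑ i : Fin m, sin (((i:ℕ)+1) * thA m h) * sin (((i:ℕ)+1) * thA m h')
      = ((∑ i ∈ range (m+1), cos (i * (2*π*(a:ℝ)/(2*m+1)))) -
         (∑ i ∈ range (m+1), cos (i * (2*π*(b:ℝ)/(2*m+1))))) / 2 := by
    rw [Fin.sum_univ_eq_sum_range (fun i => sin (((i:ℕ)+1) * thA m h) * sin (((i:ℕ)+1) * thA m h'))]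
    rw [Finset.sum_congr rfl (fun i _ => key ((i:ℕ)+1))]
    rw [← Finset.sum_div, Finset.sum_sub_distrib]
    rw [Finset.sum_range_succ' (fun i => cos (i * (2*π*(a:ℝ)/(2*m+1)))) m]
    rw [Finset.sum_range_succ' (fun i => cos (i * (2*π*(b:ℝ)/(2*m+1)))) m]
    push_cast
    simp
  rw [hrw]
  have hCb : ∑ i ∈ range (m+1), cos (i * (2*π*(b:ℝ)/(2*m+1))) = 1/2 := by
    have := sum_cos_C m b (by
      intro hdvd
      have hpos : (0:ℤ) < b := by omega
      have := Int.le_of_dvd hpos hdvd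
      omega)
    exact this
  by_cases hhh : h = h'
  · subst hhh
    have ha0 : a = 0 := by omega
    have hCa : ∑ i ∈ range (m+1), cos (i * (2*π*(a:ℝ)/(2*m+1))) = m+1 := by
      rw [ha0]
      simp
    rw [hCa, hCb, if_pos rfl]
    ring
  · have ha0 : a ≠ 0 := by
      intro h0
      apply hhh
      have : (h:ℕ) = (h':ℕ) := by omega
      exact Fin.ext this
    have hCa : ∑ i ∈ range (m+1), cos (i * (2*π*(a:ℝ)/(2*m+1))) = 1/2 := by
      have := sum_cos_C m a (by
        intro hdvd
        have h1 : (2*(m:ℤ)+1) ∣ |a| := (dvd_abs _ _).mpr hdvd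
        have h2 := Int.le_of_dvd (abs_pos.mpr ha0) h1
        have := h.isLt; have := h'.isLt
        rcases abs_cases a with ⟨he, _⟩ | ⟨he, _⟩ <;> omega)
      exact this
    rw [hCa, hCb, if_neg hhh]
    ring

/-- weighted orthogonality sum for the `n`-part. -/
lemma S2 (n : ℕ) (hn : 1 ≤ n) (k k' : Fin n) :
    ∑ j : Fin n, (if (j:ℕ) = n-1 then (1/2:ℝ) else 1) *
        (sin (((j:ℕ)+1) * phA n k) * sin (((j:ℕ)+1) * phA n k'))
      = if k = k' then (n:ℝ)/2 else 0 := by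
  have hnne : (n:ℝ) ≠ 0 := by positivity
  set a : ℤ := (k:ℕ) - (k':ℕ) with ha
  set b : ℤ := (k:ℕ) + (k':ℕ) + 1 with hb
  set g : ℝ → ℝ := fun t => sin (t * phA n k) * sin (t * phA n k') with hg
  -- step 1: weighted sum = full sum - (1/2) * g n
  have hlast : (⟨n-1, by omega⟩ : Fin n) ∈ (univ : Finset (Fin n)) := mem_univ _
  have step1 : ∑ j : Fin n, (if (j:ℕ) = n-1 then (1/2:ℝ) else 1) *
        (sin (((j:ℕ)+1) * phA n k) * sin (((j:ℕ)+1) * phA n k'))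
      = (∑ j ∈ range n, g ((j:ℝ)+1)) - (1/2) * g n := by
    have hsplit : ∀ j : Fin n, (if (j:ℕ) = n-1 then (1/2:ℝ) else 1) *
        (sin (((j:ℕ)+1) * phA n k) * sin (((j:ℕ)+1) * phA n k'))
        = g (((j:ℕ):ℝ)+1) - (if j = (⟨n-1, by omega⟩ : Fin n) then (1/2) * g (((j:ℕ):ℝ)+1) else 0) := by
      intro j
      by_cases hj : j = (⟨n-1, by omega⟩ : Fin n)
      · rw [if_pos hj, if_pos (by rw [hj])]
        ring
      · rw [if_neg hj, if_neg (by intro hc; exact hj (Fin.ext hc))]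
        ring
    rw [Finset.sum_congr rfl (fun j _ => hsplit j), Finset.sum_sub_distrib]
    rw [Finset.sum_ite_eq' univ (⟨n-1, by omega⟩ : Fin n)
      (fun j => (1/2) * g (((j:ℕ):ℝ)+1)), if_pos hlast]
    rw [Fin.sum_univ_eq_sum_range (fun j => g ((j:ℝ)+1))]
    have hcast : ((((⟨n-1, by omega⟩ : Fin n) : ℕ)):ℝ) + 1 = (n:ℝ) := by
      simp only []
      rw [Nat.cast_sub hn]
      simp
    rw [hcast]
  rw [step1]
  -- step 2: full sum via cosines
  have key : ∀ t : ℝ, g t = (cos (t * ((a:ℝ)*π/n)) - cos (t * ((b:ℝ)*π/n))) / 2 := by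
    intro t
    have e1 : t * phA n k - t * phA n k' = t * ((a:ℝ)*π/n) := by
      rw [phA, phA, ha]; push_cast; try field_simp
      try ring
    have e2 : t * phA n k + t * phA n k' = t * ((b:ℝ)*π/n) := by
      rw [phA, phA, hb]; push_cast; try field_simp
      try ring
    rw [hg]; dsimp only; rw [sin_mul_sin, e1, e2]
  have hFsum : ∀ c : ℤ, (∑ j ∈ range n, cos ((j:ℝ) * ((c:ℝ)*π/n)))
      = ∑ j ∈ range n, cos ((j:ℝ) * ((c:ℝ)*π/n)) := fun _ => rfl
  -- ∑_{j∈range n} cos((j+1)β_c) = Fsum c + cos(cπ) - 1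
  have hshift : ∀ c : ℤ, ∑ j ∈ range n, cos (((j:ℝ)+1) * ((c:ℝ)*π/n))
      = (∑ j ∈ range n, cos ((j:ℝ) * ((c:ℝ)*π/n))) + cos ((c:ℝ)*π) - 1 := by
    intro c
    have h1 := Finset.sum_range_succ' (fun j => cos ((j:ℝ) * ((c:ℝ)*π/n))) n
    have h2 := Finset.sum_range_succ (fun j => cos ((j:ℝ) * ((c:ℝ)*π/n))) n
    have h3 : ((n:ℝ)) * ((c:ℝ)*π/n) = (c:ℝ)*π := by field_simp
    simp only [h3] at h2
    have h4 : ∀ j : ℕ, (((j+1:ℕ)):ℝ) = (j:ℝ)+1 := by intro j; push_cast; ring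
    simp only [h4] at h1
    simp only [Nat.cast_zero, zero_mul, Real.cos_zero] at h1
    -- h1 : ∑_{range (n+1)} = ∑_{range n} f(j+1) + 1
    -- h2 : ∑_{range (n+1)} = Fsum + cos(cπ)
    have := h1.symm.trans h2
    linarith [this]
  have hsum2 : (∑ j ∈ range n, g ((j:ℝ)+1))
      = ((∑ j ∈ range n, cos ((j:ℝ) * ((a:ℝ)*π/n))) + cos ((a:ℝ)*π)
        - (∑ j ∈ range n, cos ((j:ℝ) * ((b:ℝ)*π/n))) - cos ((b:ℝ)*π)) / 2 := by
    rw [show (∑ j ∈ range n, g ((j:ℝ)+1))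
        = ∑ j ∈ range n, ((cos (((j:ℝ)+1) * ((a:ℝ)*π/n)) - cos (((j:ℝ)+1) * ((b:ℝ)*π/n)))/2)
      from Finset.sum_congr rfl fun j _ => key ((j:ℝ)+1)]
    rw [← Finset.sum_div, Finset.sum_sub_distrib]
    rw [hshift a, hshift b]
    ring
  rw [hsum2]
  have hgn : g n = (-1:ℝ)^((k:ℕ)) * (-1:ℝ)^((k':ℕ)) := by
    rw [hg]; dsimp only; rw [sin_top_phA n k hn, sin_top_phA n k' hn]
  rw [hgn]
  have hbodd_or : Odd b ∨ Even b := by rcases Int.even_or_odd b with h | h; exact Or.inr h; exact Or.inl h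
  by_cases hkk : k = k'
  · subst hkk
    have ha0 : a = 0 := by omega
    have hbodd : Odd b := by refine ⟨(k:ℕ), by omega⟩
    have hFa : ∑ j ∈ range n, cos ((j:ℝ) * ((a:ℝ)*π/n)) = n := by
      rw [ha0]; simp
    have hFb := sum_cos_F_odd n hn b hbodd
    rw [hFa, hFb, cos_int_pi_even (by rw [ha0]; exact Even.zero), cos_int_pi_odd hbodd, if_pos rfl]
    have : (-1:ℝ)^((k:ℕ)) * (-1:ℝ)^((k:ℕ)) = 1 := by
      rw [← pow_add]
      exact Even.neg_one_pow ⟨(k:ℕ), by ring⟩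
    rw [this]
    ring
  · have hane : a ≠ 0 := by
      intro h0; exact hkk (Fin.ext (by omega))
    rw [if_neg hkk]
    rcases Int.even_or_odd a with haeven | haodd
    · -- a even nonzero, b odd, (-1)^(k+k') = 1
      have hbodd : Odd b := by
        rcases haeven with ⟨c, hc⟩
        refine ⟨(k':ℤ) + c, by omega⟩
      have hFa := sum_cos_F_even n hn a haeven (by
        intro hdvd
        have h1 : (2*(n:ℤ)) ∣ |a| := (dvd_abs _ _).mpr hdvd
        have h2 := Int.le_of_dvd (abs_pos.mpr hane) h1
        have := k.isLt; have := k'.isLt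
        rcases abs_cases a with ⟨he, _⟩ | ⟨he, _⟩ <;> omega)
      have hFb := sum_cos_F_odd n hn b hbodd
      rw [hFa, hFb, cos_int_pi_even haeven, cos_int_pi_odd hbodd]
      have hpar : Even ((k:ℕ) + (k':ℕ)) := by
        rcases haeven with ⟨c, hc⟩
        have : ((k:ℕ) : ℤ) + (k':ℕ) = 2*(k':ℤ) + c + c := by omega
        have h2 : Even (((k:ℕ):ℤ) + ((k':ℕ):ℤ)) := ⟨(k':ℤ) + c, by omega⟩
        have h3 : Even (((k:ℕ) + (k':ℕ) : ℕ) : ℤ) := by push_cast; exact h2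
        exact_mod_cast (Int.even_coe_nat _).mp h3
      have : (-1:ℝ)^((k:ℕ)) * (-1:ℝ)^((k':ℕ)) = 1 := by
        rw [← pow_add]; exact Even.neg_one_pow hpar
      rw [this]
      ring
    · -- a odd, b even, (-1)^(k+k') = -1
      have hbeven : Even b := by
        rcases haodd with ⟨c, hc⟩
        refine ⟨(k':ℤ) + c + 1, by omega⟩
      have hFa := sum_cos_F_odd n hn a haodd
      have hFb := sum_cos_F_even n hn b hbeven (by
        intro hdvd
        have hbpos : (0:ℤ) < b := by omega
        have h2 := Int.le_of_dvd hbpos hdvd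
        have := k.isLt; have := k'.isLt
        omega)
      rw [hFa, hFb, cos_int_pi_odd haodd, cos_int_pi_even hbeven]
      have hpar : Odd ((k:ℕ) + (k':ℕ)) := by
        rcases haodd with ⟨c, hc⟩
        have h2 : Odd (((k:ℕ):ℤ) + ((k':ℕ):ℤ)) := ⟨(k':ℤ) + c, by omega⟩
        have h3 : Odd (((k:ℕ) + (k':ℕ) : ℕ) : ℤ) := by push_cast; exact h2
        exact_mod_cast (Int.odd_coe_nat _).mp h3
      have : (-1:ℝ)^((k:ℕ)) * (-1:ℝ)^((k':ℕ)) = -1 := by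
        rw [← pow_add]; exact Odd.neg_one_pow hpar
      rw [this]
      ring

def matM (m : ℕ) : Matrix (Fin m) (Fin m) ℝ :=
  Matrix.of fun i i' =>
    (if (i':ℕ)+1 = (i:ℕ) then (-1:ℝ) else 0) + (if (i:ℕ)+1 = (i':ℕ) then -1 else 0) +
    (if i = i' ∧ (i:ℕ) = m-1 then -1 else 0)


lemma matA'_diag (n : ℕ) (j : Fin n) : matA' n j j = 4 := by simp [matA']

lemma matA'_decomp (n : ℕ) (j j' : Fin n) :
    matA' n j j' = (if j = j' then (4:ℝ) else 0) + (if (j':ℕ)+1 = (j:ℕ) then -1 else 0)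
      + (if (j:ℕ)+1 = (j':ℕ) then -1 else 0)
      + (if (j:ℕ) = n-1 ∧ (j':ℕ)+2 = n then -1 else 0) := by
  have habs : (|(j:ℤ) - (j':ℤ)| = 1) ↔ ((j':ℕ)+1 = (j:ℕ) ∨ (j:ℕ)+1 = (j':ℕ)) := by
    rw [abs_eq (by norm_num : (0:ℤ) ≤ 1)]
    omega
  have hje : (j = j') ↔ ((j:ℕ) = (j':ℕ)) := Fin.ext_iff
  have hj := j.isLt; have hj' := j'.isLt
  simp only [matA', Matrix.of_apply, habs, hje]
  split_ifs <;> norm_num <;> omega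

lemma matD'_decomp (m n : ℕ) (p q : Fin m × Fin n) :
    matD' m n p q = (if p.1 = q.1 then matA' n p.2 q.2 else 0)
      + matM m p.1 q.1 * (if p.2 = q.2 then 1 else 0) := by
  obtain ⟨i, j⟩ := p
  obtain ⟨i', j'⟩ := q
  have habs : (|(i:ℤ) - (i':ℤ)| = 1) ↔ ((i':ℕ)+1 = (i:ℕ) ∨ (i:ℕ)+1 = (i':ℕ)) := by
    rw [abs_eq (by norm_num : (0:ℤ) ≤ 1)]
    omega
  have hi := i.isLt; have hi' := i'.isLt
  simp only [matD', matM, Matrix.of_apply, habs]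
  by_cases hii : i = i'
  · subst hii
    have h1 : ¬((i:ℕ)+1 = (i:ℕ)) := by omega
    simp only [if_pos rfl, if_neg h1, true_and]
    by_cases hlast : (i:ℕ) = m-1
    · simp only [if_pos hlast]
      by_cases hjj : j = j'
      · subst hjj
        simp only [matB', Matrix.of_apply, if_pos rfl, matA'_diag]
        norm_num
      · simp only [matB', Matrix.of_apply, if_neg hjj]
        simp
    · simp only [if_neg hlast]
      simp
  · have hne : ¬(i = i' ∧ (i:ℕ) = m-1) := fun h => hii h.1
    simp only [if_neg hii, if_neg hne, add_zero]
    by_cases h1 : (i':ℕ)+1 = (i:ℕ)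
    · have h2 : ¬((i:ℕ)+1 = (i':ℕ)) := by omega
      simp only [if_pos (Or.inl h1), if_pos h1, if_neg h2, add_zero, zero_add,
        Matrix.neg_apply, Matrix.one_apply]
      by_cases hjj : j = j' <;> simp [hjj]
    · by_cases h2 : (i:ℕ)+1 = (i':ℕ)
      · simp only [if_pos (Or.inr h2), if_pos h2, if_neg h1, add_zero, zero_add,
          Matrix.neg_apply, Matrix.one_apply]
        by_cases hjj : j = j' <;> simp [hjj]
      · have : ¬((i':ℕ)+1 = (i:ℕ) ∨ (i:ℕ)+1 = (i':ℕ)) := by omega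
        simp [this, h1, h2]

lemma sin_succ_thA (m : ℕ) (h : ℕ) :
    sin (((m:ℝ)+1) * thA m h) = sin ((m:ℝ) * thA m h) := by
  have hNne : (2*(m:ℝ)+1) ≠ 0 := by positivity
  have e1 : ((m:ℝ)+1) * thA m h = (π - (m:ℝ) * thA m h) + (h:ℝ) * (2*π) := by
    rw [thA]; field_simp; ring
  rw [e1]
  have := Real.sin_add_int_mul_two_pi (π - (m:ℝ) * thA m h) (h:ℤ)
  push_cast at this
  rw [this, Real.sin_pi_sub]

/-- The eigenvector equation for `matA'`. -/
lemma eigA (n : ℕ) (hn : 1 ≤ n) (k : Fin n) (j : Fin n) :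
    ∑ j' : Fin n, matA' n j j' * sin ((((j':ℕ):ℝ)+1) * phA n k)
      = (4 - 2 * cos (phA n k)) * sin ((((j:ℕ):ℝ)+1) * phA n k) := by
  set φ : ℝ := phA n k with hφ
  set s : ℝ → ℝ := fun t => sin (t * φ) with hs
  have hsum : ∑ j' : Fin n, matA' n j j' * sin ((((j':ℕ):ℝ)+1) * φ)
      = (∑ j' : Fin n, (if j = j' then (4:ℝ) else 0) * s (((j':ℕ):ℝ)+1))
      + (∑ j' : Fin n, (if (j':ℕ)+1 = (j:ℕ) then (-1:ℝ) else 0) * s (((j':ℕ):ℝ)+1))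
      + (∑ j' : Fin n, (if (j:ℕ)+1 = (j':ℕ) then (-1:ℝ) else 0) * s (((j':ℕ):ℝ)+1))
      + (∑ j' : Fin n, (if (j:ℕ) = n-1 ∧ (j':ℕ)+2 = n then (-1:ℝ) else 0) * s (((j':ℕ):ℝ)+1)) := by
    rw [← Finset.sum_add_distrib, ← Finset.sum_add_distrib, ← Finset.sum_add_distrib]
    refine Finset.sum_congr rfl fun j' _ => ?_
    rw [matA'_decomp]
    ring
  have h1 : (∑ j' : Fin n, (if j = j' then (4:ℝ) else 0) * s (((j':ℕ):ℝ)+1))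
      = 4 * s (((j:ℕ):ℝ)+1) := by
    simp only [ite_mul, zero_mul]
    rw [Finset.sum_ite_eq univ j (fun j' => 4 * s (((j':ℕ):ℝ)+1))]
    simp
  have h2 : (∑ j' : Fin n, (if (j':ℕ)+1 = (j:ℕ) then (-1:ℝ) else 0) * s (((j':ℕ):ℝ)+1))
      = - s ((j:ℕ):ℝ) := by
    by_cases hj0 : (j:ℕ) = 0
    · rw [Finset.sum_eq_zero, hj0]
      · simp [hs]
      · intro j' _
        have : ¬((j':ℕ)+1 = (j:ℕ)) := by omega
        simp [this]
    · obtain ⟨t, ht⟩ : ∃ t, (j:ℕ) = t+1 := ⟨(j:ℕ)-1, by omega⟩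
      have htlt : t < n := by have := j.isLt; omega
      rw [Finset.sum_eq_single (⟨t, htlt⟩ : Fin n)]
      · have : ((⟨t, htlt⟩ : Fin n):ℕ)+1 = (j:ℕ) := by simp [ht]
        rw [if_pos this]
        have hc : (((⟨t, htlt⟩ : Fin n):ℕ):ℝ)+1 = ((j:ℕ):ℝ) := by
          simp [ht]
        rw [hc]
        ring
      · intro b _ hb
        have : ¬((b:ℕ)+1 = (j:ℕ)) := by
          intro hc
          apply hb
          apply Fin.ext
          simp [ht] at hc ⊢
          omega
        simp [this]
      · intro hmem
        exact absurd (mem_univ _) hmem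
  have h3 : (∑ j' : Fin n, (if (j:ℕ)+1 = (j':ℕ) then (-1:ℝ) else 0) * s (((j':ℕ):ℝ)+1))
      = if (j:ℕ)+1 < n then - s (((j:ℕ):ℝ)+2) else 0 := by
    by_cases hlt : (j:ℕ)+1 < n
    · rw [if_pos hlt, Finset.sum_eq_single (⟨(j:ℕ)+1, hlt⟩ : Fin n)]
      · rw [if_pos (by simp)]
        have hc : (((⟨(j:ℕ)+1, hlt⟩ : Fin n):ℕ):ℝ)+1 = ((j:ℕ):ℝ)+2 := by
          simp; ring
        rw [hc]; ring
      · intro b _ hb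
        have : ¬((j:ℕ)+1 = (b:ℕ)) := by
          intro hc; apply hb; apply Fin.ext; simp; omega
        simp [this]
      · intro hmem; exact absurd (mem_univ _) hmem
    · rw [if_neg hlt, Finset.sum_eq_zero]
      intro j' _
      have : ¬((j:ℕ)+1 = (j':ℕ)) := by have := j'.isLt; omega
      simp [this]
  have h4 : (∑ j' : Fin n, (if (j:ℕ) = n-1 ∧ (j':ℕ)+2 = n then (-1:ℝ) else 0) * s (((j':ℕ):ℝ)+1))
      = if (j:ℕ) = n-1 then - s ((n:ℝ)-1) else 0 := by
    by_cases hj : (j:ℕ) = n-1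
    · rw [if_pos hj]
      by_cases hn2 : 2 ≤ n
      · rw [Finset.sum_eq_single (⟨n-2, by omega⟩ : Fin n)]
        · rw [if_pos (by constructor; exact hj; simp; omega)]
          have hc : (((⟨n-2, by omega⟩ : Fin n):ℕ):ℝ)+1 = (n:ℝ)-1 := by
            simp
            rw [Nat.cast_sub (by omega)]
            push_cast
            ring
          rw [hc]; ring
        · intro b _ hb
          have : ¬((j:ℕ) = n-1 ∧ (b:ℕ)+2 = n) := by
            intro hc; apply hb; apply Fin.ext; simp; omega
          simp [this]
        · intro hmem; exact absurd (mem_univ _) hmem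
      · have hn1 : n = 1 := by omega
        rw [Finset.sum_eq_zero, hn1]
        · have : ((1:ℕ):ℝ) - 1 = 0 := by norm_num
          simp [hs]
        · intro j' _
          have : ¬((j:ℕ) = n-1 ∧ (j':ℕ)+2 = n) := by
            have := j'.isLt; omega
          simp [this]
    · rw [if_neg hj, Finset.sum_eq_zero]
      intro j' _
      have : ¬((j:ℕ) = n-1 ∧ (j':ℕ)+2 = n) := by tauto
      simp [this]
  rw [hsum, h1, h2, h3, h4]
  -- now trig identities
  have hsin_sub : ∀ t : ℝ, sin ((t - 1) * φ) = sin (t*φ) * cos φ - cos (t*φ) * sin φ := by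
    intro t
    have : (t-1)*φ = t*φ - φ := by ring
    rw [this, Real.sin_sub]
  have hsin_add : ∀ t : ℝ, sin ((t + 1) * φ) = sin (t*φ) * cos φ + cos (t*φ) * sin φ := by
    intro t
    have : (t+1)*φ = t*φ + φ := by ring
    rw [this, Real.sin_add]
  by_cases hj : (j:ℕ) = n-1
  · have hjlt : ¬((j:ℕ)+1 < n) := by omega
    rw [if_neg hjlt, if_pos hj]
    have hcast : ((j:ℕ):ℝ) = (n:ℝ)-1 := by
      rw [hj, Nat.cast_sub hn]; push_cast; ring
    rw [hcast]
    have e1 : (n:ℝ)-1+1 = (n:ℝ) := by ring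
    rw [e1]
    have e2 : s ((n:ℝ)-1) = s (n:ℝ) * cos φ - cos ((n:ℝ)*φ) * sin φ := by
      rw [hs]; dsimp only
      have : ((n:ℝ)-1) = (n:ℝ) - 1 := rfl
      rw [show ((n:ℝ)-1)*φ = (n:ℝ)*φ - φ by ring, Real.sin_sub]
    rw [e2, cos_top_phA n k hn]
    rw [hs]; dsimp only
    ring
  · have hjlt : (j:ℕ)+1 < n := by have := j.isLt; omega
    rw [if_pos hjlt, if_neg hj]
    rw [hs]; dsimp only
    rw [show ((j:ℕ):ℝ)*φ = (((j:ℕ):ℝ)+1)*φ - φ by ring, Real.sin_sub,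
        show (((j:ℕ):ℝ)+2)*φ = (((j:ℕ):ℝ)+1)*φ + φ by ring, Real.sin_add]
    ring

/-- The eigenvector equation for `matM`. -/
lemma eigM (m : ℕ) (hm : 1 ≤ m) (h : Fin m) (i : Fin m) :
    ∑ i' : Fin m, matM m i i' * sin ((((i':ℕ):ℝ)+1) * thA m h)
      = (-2 * cos (thA m h)) * sin ((((i:ℕ):ℝ)+1) * thA m h) := by
  set θ : ℝ := thA m h with hθ
  set s : ℝ → ℝ := fun t => sin (t * θ) with hs
  have hsum : ∑ i' : Fin m, matM m i i' * sin ((((i':ℕ):ℝ)+1) * θ)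
      = (∑ i' : Fin m, (if (i':ℕ)+1 = (i:ℕ) then (-1:ℝ) else 0) * s (((i':ℕ):ℝ)+1))
      + (∑ i' : Fin m, (if (i:ℕ)+1 = (i':ℕ) then (-1:ℝ) else 0) * s (((i':ℕ):ℝ)+1))
      + (∑ i' : Fin m, (if i = i' ∧ (i:ℕ) = m-1 then (-1:ℝ) else 0) * s (((i':ℕ):ℝ)+1)) := by
    rw [← Finset.sum_add_distrib, ← Finset.sum_add_distrib]
    refine Finset.sum_congr rfl fun i' _ => ?_
    rw [matM]
    dsimp only [Matrix.of_apply]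
    ring
  have h2 : (∑ i' : Fin m, (if (i':ℕ)+1 = (i:ℕ) then (-1:ℝ) else 0) * s (((i':ℕ):ℝ)+1))
      = - s ((i:ℕ):ℝ) := by
    by_cases hj0 : (i:ℕ) = 0
    · rw [Finset.sum_eq_zero, hj0]
      · simp [hs]
      · intro i' _
        have : ¬((i':ℕ)+1 = (i:ℕ)) := by omega
        simp [this]
    · obtain ⟨t, ht⟩ : ∃ t, (i:ℕ) = t+1 := ⟨(i:ℕ)-1, by omega⟩
      have htlt : t < m := by have := i.isLt; omega
      rw [Finset.sum_eq_single (⟨t, htlt⟩ : Fin m)]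
      · rw [if_pos (by simp [ht])]
        have hc : (((⟨t, htlt⟩ : Fin m):ℕ):ℝ)+1 = ((i:ℕ):ℝ) := by simp [ht]
        rw [hc]; ring
      · intro b _ hb
        have : ¬((b:ℕ)+1 = (i:ℕ)) := by
          intro hc; apply hb; apply Fin.ext; simp; omega
        simp [this]
      · intro hmem; exact absurd (mem_univ _) hmem
  have h3 : (∑ i' : Fin m, (if (i:ℕ)+1 = (i':ℕ) then (-1:ℝ) else 0) * s (((i':ℕ):ℝ)+1))
      = if (i:ℕ)+1 < m then - s (((i:ℕ):ℝ)+2) else 0 := by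
    by_cases hlt : (i:ℕ)+1 < m
    · rw [if_pos hlt, Finset.sum_eq_single (⟨(i:ℕ)+1, hlt⟩ : Fin m)]
      · rw [if_pos (by simp)]
        have hc : (((⟨(i:ℕ)+1, hlt⟩ : Fin m):ℕ):ℝ)+1 = ((i:ℕ):ℝ)+2 := by simp; ring
        rw [hc]; ring
      · intro b _ hb
        have : ¬((i:ℕ)+1 = (b:ℕ)) := by
          intro hc; apply hb; apply Fin.ext; simp; omega
        simp [this]
      · intro hmem; exact absurd (mem_univ _) hmem
    · rw [if_neg hlt, Finset.sum_eq_zero]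
      intro i' _
      have : ¬((i:ℕ)+1 = (i':ℕ)) := by have := i'.isLt; omega
      simp [this]
  have h5 : (∑ i' : Fin m, (if i = i' ∧ (i:ℕ) = m-1 then (-1:ℝ) else 0) * s (((i':ℕ):ℝ)+1))
      = if (i:ℕ) = m-1 then - s (((i:ℕ):ℝ)+1) else 0 := by
    by_cases hlast : (i:ℕ) = m-1
    · rw [if_pos hlast, Finset.sum_eq_single i]
      · rw [if_pos ⟨rfl, hlast⟩]; ring
      · intro b _ hb
        have : ¬(i = b ∧ (i:ℕ) = m-1) := by
          intro hc; exact hb hc.1.symm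
        simp [this]
      · intro hmem; exact absurd (mem_univ _) hmem
    · rw [if_neg hlast, Finset.sum_eq_zero]
      intro i' _
      have : ¬(i = i' ∧ (i:ℕ) = m-1) := by tauto
      simp [this]
  rw [hsum, h2, h3, h5]
  by_cases hlast : (i:ℕ) = m-1
  · have hjlt : ¬((i:ℕ)+1 < m) := by omega
    rw [if_neg hjlt, if_pos hlast]
    have hcast : ((i:ℕ):ℝ) = (m:ℝ)-1 := by
      rw [hlast, Nat.cast_sub hm]; push_cast; ring
    rw [hcast, hs]
    dsimp only
    rw [show ((m:ℝ)-1+1) = (m:ℝ) by ring]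
    have e1 : sin (((m:ℝ)-1) * θ) = sin ((m:ℝ)*θ) * cos θ - cos ((m:ℝ)*θ) * sin θ := by
      rw [show ((m:ℝ)-1)*θ = (m:ℝ)*θ - θ by ring, Real.sin_sub]
    have e2 : sin (((m:ℝ)+1) * θ) = sin ((m:ℝ)*θ) * cos θ + cos ((m:ℝ)*θ) * sin θ := by
      rw [show ((m:ℝ)+1)*θ = (m:ℝ)*θ + θ by ring, Real.sin_add]
    have key := sin_succ_thA m h
    rw [← hθ] at key
    rw [e2] at key
    linarith [e1, key]
  · have hjlt : (i:ℕ)+1 < m := by have := i.isLt; omega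
    rw [if_pos hjlt, if_neg hlast, hs]
    dsimp only
    rw [show ((i:ℕ):ℝ)*θ = (((i:ℕ):ℝ)+1)*θ - θ by ring, Real.sin_sub,
        show (((i:ℕ):ℝ)+2)*θ = (((i:ℕ):ℝ)+1)*θ + θ by ring, Real.sin_add]
    ring

section Assembly

variable (m n : ℕ)

def matR (m n : ℕ) : Matrix (Fin m × Fin n) (Fin m × Fin n) ℝ :=
  Matrix.of fun p q =>
    sin ((((p.1:ℕ):ℝ)+1) * thA m q.1) * sin ((((p.2:ℕ):ℝ)+1) * phA n q.2)

def matL (m n : ℕ) : Matrix (Fin m × Fin n) (Fin m × Fin n) ℝ :=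
  Matrix.of fun q p =>
    (if (p.2:ℕ) = n-1 then (1/2:ℝ) else 1) *
      (sin ((((p.1:ℕ):ℝ)+1) * thA m q.1) * sin ((((p.2:ℕ):ℝ)+1) * phA n q.2))

def dEig (m n : ℕ) (q : Fin m × Fin n) : ℝ :=
  (-2 * cos (thA m q.1)) + (4 - 2 * cos (phA n q.2))

lemma hDR (hm : 1 ≤ m) (hn : 1 ≤ n) :
    matD' m n * matR m n = matR m n * Matrix.diagonal (dEig m n) := by
  ext p q
  rw [Matrix.mul_diagonal, Matrix.mul_apply]
  set a : Fin m → ℝ := fun i' => sin ((((i':ℕ):ℝ)+1) * thA m q.1) with ha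
  set b : Fin n → ℝ := fun j' => sin ((((j':ℕ):ℝ)+1) * phA n q.2) with hb
  have step : ∀ P : Fin m × Fin n, matD' m n p P * matR m n P q
      = (if p.1 = P.1 then matA' n p.2 P.2 * b P.2 * a P.1 else 0)
      + (if p.2 = P.2 then matM m p.1 P.1 * a P.1 * b P.2 else 0) := by
    intro P
    rw [matD'_decomp, matR]
    dsimp only [Matrix.of_apply]
    by_cases h1 : p.1 = P.1 <;> by_cases h2 : p.2 = P.2 <;>
      simp only [if_pos, if_neg, h1, h2, if_true, if_false, ite_true, ite_false] <;> ring
  rw [Finset.sum_congr rfl fun P _ => step P, Finset.sum_add_distrib]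
  have hA : (∑ P : Fin m × Fin n, (if p.1 = P.1 then matA' n p.2 P.2 * b P.2 * a P.1 else 0))
      = ((4 - 2 * cos (phA n q.2)) * b p.2) * a p.1 := by
    rw [Fintype.sum_prod_type]
    have inner : ∀ i' : Fin m, (∑ j' : Fin n, (if p.1 = i' then matA' n p.2 j' * b j' * a i' else 0))
        = (if p.1 = i' then (∑ j' : Fin n, matA' n p.2 j' * b j') * a i' else 0) := by
      intro i'
      by_cases h1 : p.1 = i'
      · simp only [if_pos h1, Finset.sum_mul]
      · simp only [if_neg h1, Finset.sum_const_zero]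
    rw [Finset.sum_congr rfl fun i' _ => inner i']
    rw [Finset.sum_ite_eq univ p.1 (fun i' => (∑ j' : Fin n, matA' n p.2 j' * b j') * a i'),
      if_pos (mem_univ _)]
    rw [hb]
    rw [eigA n hn q.2 p.2]
  have hM : (∑ P : Fin m × Fin n, (if p.2 = P.2 then matM m p.1 P.1 * a P.1 * b P.2 else 0))
      = ((-2 * cos (thA m q.1)) * a p.1) * b p.2 := by
    rw [Fintype.sum_prod_type]
    have inner : ∀ i' : Fin m, (∑ j' : Fin n, (if p.2 = j' then matM m p.1 i' * a i' * b j' else 0))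
        = matM m p.1 i' * a i' * b p.2 := by
      intro i'
      rw [Finset.sum_ite_eq univ p.2 (fun j' => matM m p.1 i' * a i' * b j'), if_pos (mem_univ _)]
    rw [Finset.sum_congr rfl fun i' _ => inner i']
    rw [← Finset.sum_mul]
    congr 1
    rw [show (∑ i' : Fin m, matM m p.1 i' * a i') = (-2 * cos (thA m q.1)) * a p.1
      from by rw [ha]; exact eigM m hm q.1 p.1]
  rw [hA, hM, matR]
  dsimp only [Matrix.of_apply, dEig]
  rw [ha, hb]
  dsimp only
  ring

lemma hLR (hm : 1 ≤ m) (hn : 1 ≤ n) :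
    matL m n * matR m n = (((2*(m:ℝ)+1)/4) * ((n:ℝ)/2)) • (1 : Matrix (Fin m × Fin n) (Fin m × Fin n) ℝ) := by
  ext q q'
  rw [Matrix.mul_apply, Matrix.smul_apply, Matrix.one_apply]
  rw [Fintype.sum_prod_type]
  have hterm : ∀ (i : Fin m) (j : Fin n),
      matL m n q (i, j) * matR m n (i, j) q'
      = (sin ((((i:ℕ):ℝ)+1) * thA m q.1) * sin ((((i:ℕ):ℝ)+1) * thA m q'.1)) *
        ((if (j:ℕ) = n-1 then (1/2:ℝ) else 1) *
          (sin ((((j:ℕ):ℝ)+1) * phA n q.2) * sin ((((j:ℕ):ℝ)+1) * phA n q'.2))) := by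
    intro i j
    rw [matL, matR]
    dsimp only [Matrix.of_apply]
    ring
  rw [Finset.sum_congr rfl fun i _ => Finset.sum_congr rfl fun j _ => hterm i j]
  rw [show (∑ i : Fin m, ∑ j : Fin n,
      (sin ((((i:ℕ):ℝ)+1) * thA m q.1) * sin ((((i:ℕ):ℝ)+1) * thA m q'.1)) *
        ((if (j:ℕ) = n-1 then (1/2:ℝ) else 1) *
          (sin ((((j:ℕ):ℝ)+1) * phA n q.2) * sin ((((j:ℕ):ℝ)+1) * phA n q'.2))))
    = (∑ i : Fin m, sin ((((i:ℕ):ℝ)+1) * thA m q.1) * sin ((((i:ℕ):ℝ)+1) * thA m q'.1)) *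
      (∑ j : Fin n, (if (j:ℕ) = n-1 then (1/2:ℝ) else 1) *
          (sin ((((j:ℕ):ℝ)+1) * phA n q.2) * sin ((((j:ℕ):ℝ)+1) * phA n q'.2)))
    from by rw [Finset.sum_mul_sum]]
  rw [S1 m q.1 q'.1, S2 n hn q.2 q'.2]
  by_cases h1 : q.1 = q'.1 <;> by_cases h2 : q.2 = q'.2
  · rw [if_pos h1, if_pos h2, if_pos (Prod.ext h1 h2), smul_eq_mul]
    ring
  · rw [if_pos h1, if_neg h2, if_neg (by intro hc; exact h2 (congrArg Prod.snd hc)), smul_eq_mul]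
    ring
  · rw [if_neg h1, if_pos h2, if_neg (by intro hc; exact h1 (congrArg Prod.fst hc)), smul_eq_mul]
    ring
  · rw [if_neg h1, if_neg h2, if_neg (by intro hc; exact h1 (congrArg Prod.fst hc)), smul_eq_mul]
    ring


lemma det_matD'_aux (hm : 1 ≤ m) (hn : 1 ≤ n) :
    (matD' m n).det = ∏ q : Fin m × Fin n, dEig m n q := by
  set c : ℝ := ((2*(m:ℝ)+1)/4) * ((n:ℝ)/2) with hc
  have hcne : c ≠ 0 := by
    rw [hc]
    have h2 : (0:ℝ) < (n:ℝ) := by exact_mod_cast hn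
    positivity
  have hL'R : (c⁻¹ • matL m n) * matR m n = 1 := by
    rw [Matrix.smul_mul, hLR m n hm hn, ← hc, smul_smul, inv_mul_cancel₀ hcne, one_smul]
  have hRL' : matR m n * (c⁻¹ • matL m n) = 1 := mul_eq_one_comm.mp hL'R
  have hfact : matD' m n = matR m n * Matrix.diagonal (dEig m n) * (c⁻¹ • matL m n) := by
    calc matD' m n = matD' m n * (matR m n * (c⁻¹ • matL m n)) := by rw [hRL', mul_one]
    _ = (matD' m n * matR m n) * (c⁻¹ • matL m n) := by rw [mul_assoc]
    _ = (matR m n * Matrix.diagonal (dEig m n)) * (c⁻¹ • matL m n) := by rw [hDR m n hm hn]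
  have hdet1 : (matR m n).det * (c⁻¹ • matL m n).det = 1 := by
    rw [← Matrix.det_mul, hRL', Matrix.det_one]
  calc (matD' m n).det
      = (matR m n).det * (Matrix.diagonal (dEig m n)).det * (c⁻¹ • matL m n).det := by
        rw [hfact, Matrix.det_mul, Matrix.det_mul]
    _ = (Matrix.diagonal (dEig m n)).det * ((matR m n).det * (c⁻¹ • matL m n).det) := by ring
    _ = (Matrix.diagonal (dEig m n)).det := by rw [hdet1, mul_one]
    _ = ∏ q : Fin m × Fin n, dEig m n q := Matrix.det_diagonal

end Assembly

lemma lam_eq (m : ℕ) (hm : 1 ≤ m) (h : Fin m) :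
    -2 * cos (thA m (h:ℕ)) = 4 * cos ((↑(m - (h:ℕ)) : ℝ) * π / (2*(m:ℝ)+1))^2 - 2 := by
  have hNne : (2*(m:ℝ)+1) ≠ 0 := by positivity
  have hlt := h.isLt
  rw [Real.cos_sq]
  have e1 : 2 * ((↑(m - (h:ℕ)) : ℝ) * π / (2*(m:ℝ)+1)) = π - thA m (h:ℕ) := by
    rw [thA, Nat.cast_sub (by omega)]
    field_simp
    ring
  rw [e1, Real.cos_pi_sub]
  ring

lemma mu_eq (n : ℕ) (hn : 1 ≤ n) (k : Fin n) :
    4 - 2 * cos (phA n (k:ℕ)) = 4 * cos ((2*(↑(n - (k:ℕ)) : ℝ) - 1) * π / (4*(n:ℝ)))^2 + 2 := by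
  have hNne : (4*(n:ℝ)) ≠ 0 := by positivity
  have hlt := k.isLt
  rw [Real.cos_sq]
  have e1 : 2 * ((2*(↑(n - (k:ℕ)) : ℝ) - 1) * π / (4*(n:ℝ))) = π - phA n (k:ℕ) := by
    rw [phA, Nat.cast_sub (by omega)]
    field_simp
    ring
  rw [e1, Real.cos_pi_sub]
  ring

end SandpileAux

theorem det_matD'_eq_double_product (m n : ℕ) (hm : 1 ≤ m) (hn : 1 ≤ n) :
    (matD' m n).det =
      ∏ h ∈ Finset.Icc 1 m, ∏ k ∈ Finset.Icc 1 n,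
        (4 * Real.cos (h * π / (2 * m + 1)) ^ 2 +
         4 * Real.cos ((2 * k - 1) * π / (4 * n)) ^ 2) := by
  have hm0 : 0 < m := hm
  have hn0 : 0 < n := hn
  rw [det_matD'_aux m n hm hn, Fintype.prod_prod_type]
  refine Finset.prod_nbij' (fun h : Fin m => m - (h:ℕ))
    (fun a : ℕ => (⟨(m - a) % m, Nat.mod_lt _ hm0⟩ : Fin m)) ?_ ?_ ?_ ?_ ?_
  · intro h _
    rw [Finset.mem_Icc]
    have := h.isLt
    show 1 ≤ m - (h:ℕ) ∧ m - (h:ℕ) ≤ m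
    omega
  · intro a _; exact mem_univ _
  · intro h _
    apply Fin.ext
    simp only [Fin.val_mk]
    have := h.isLt
    rw [Nat.mod_eq_of_lt (by omega)]
    omega
  · intro a ha
    rw [Finset.mem_Icc] at ha
    simp only [Fin.val_mk]
    rw [Nat.mod_eq_of_lt (by omega)]
    omega
  · intro h _
    refine Finset.prod_nbij' (fun k : Fin n => n - (k:ℕ))
      (fun b : ℕ => (⟨(n - b) % n, Nat.mod_lt _ hn0⟩ : Fin n)) ?_ ?_ ?_ ?_ ?_
    · intro k _
      rw [Finset.mem_Icc]
      have := k.isLt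
      show 1 ≤ n - (k:ℕ) ∧ n - (k:ℕ) ≤ n
      omega
    · intro b _; exact mem_univ _
    · intro k _; apply Fin.ext; simp only [Fin.val_mk]; have := k.isLt
      rw [Nat.mod_eq_of_lt (by omega)]; omega
    · intro b hb; rw [Finset.mem_Icc] at hb; simp only [Fin.val_mk]
      rw [Nat.mod_eq_of_lt (by omega)]; omega
    · intro k _
      rw [dEig]
      dsimp only
      rw [lam_eq m hm h, mu_eq n hn k]
      ring
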